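/- Let V be a Jordan algebra over K. For all x, y, u, v ∈ V one has the operator identities [D_{x,y}, D_{u,v}] = D_{{x,y,u}, v} − D_{u, {v,x,y}} and [D_{x,y}, D_{u,v}] = D_{x, {y,u,v}} − D_{{u,v,x}, y} in End_K(V). -/

import Mathlib

set_option maxHeartbeats 1600000



variable {K V : Type*} [Field K] [AddCommGroup V] [Module K V]

/-- The Jordan triple product `{x,y,z} = 2((xy)z + x(yz) - y(xz))`. -/
def triple (m : V →ₗ[K] V →ₗ[K] V) (x y z : V) : V :=
  2 • (m (m x y) z + m x (m y z) - m y (m x z))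

/-- The operator `D_{x,y} = 2 L_{xy} + 2[L_x, L_y]`, satisfying `D_{x,y} z = {x,y,z}`. -/
def Dop (m : V →ₗ[K] V →ₗ[K] V) (x y : V) : Module.End K V :=
  2 • (m (m x y) : Module.End K V) + 2 • ⁅(m x : Module.End K V), (m y : Module.End K V)⁆

/-- A derivation of the (Jordan) algebra `(V, m)`. -/
def IsDeriv (m : V →ₗ[K] V →ₗ[K] V) (D : Module.End K V) : Prop :=
  ∀ x y, D (m x y) = m (D x) y + m x (D y)

/-- A pair derivation `(D⁺, D⁻)` of the Jordan algebra `(V, m)`. -/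
def IsPairDer (m : V →ₗ[K] V →ₗ[K] V) (Dp Dm : Module.End K V) : Prop :=
  ∀ x y z,
    Dp (triple m x y z)
      = triple m (Dp x) y z + triple m x (Dm y) z + triple m x y (Dp z) ∧
    Dm (triple m x y z)
      = triple m (Dm x) y z + triple m x (Dp y) z + triple m x y (Dm z)

/-- The 5-linear identities
`[D_{x,y}, D_{u,v}] = D_{{x,y,u},v} - D_{u,{v,x,y}} = D_{x,{y,u,v}} - D_{{u,v,x},y}`. -/
theorem stmt15
    (h2 : (2 : K) ≠ 0) (h3 : (3 : K) ≠ 0)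
    (m : V →ₗ[K] V →ₗ[K] V)
    (hcomm : ∀ x y : V, m x y = m y x)
    (hJordan : ∀ x y z : V,
      ⁅(m x : Module.End K V), m (m y z)⁆ + ⁅(m y : Module.End K V), m (m z x)⁆
        + ⁅(m z : Module.End K V), m (m x y)⁆ = 0) :
    ∀ x y u v : V,
      ⁅Dop m x y, Dop m u v⁆ = Dop m (triple m x y u) v - Dop m u (triple m v x y) ∧
      ⁅Dop m x y, Dop m u v⁆ = Dop m x (triple m y u v) - Dop m (triple m u v x) y := by
  have hJ : ∀ x y z w : V,
      m x (m (m y z) w) - m (m y z) (m x w) + (m y (m (m z x) w) - m (m z x) (m y w))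
        + (m z (m (m x y) w) - m (m x y) (m z w)) = 0 := by
    intro x y z w
    have h := LinearMap.congr_fun (hJordan x y z) w
    simpa [Ring.lie_def, LinearMap.sub_apply, Module.End.mul_apply] using h
  have hA : ∀ a u v w : V, (2:ℤ) • (m a (m u (m v w))) - (2:ℤ) • (m a (m v (m u w))) + (2:ℤ) • (m a (m (m u v) w)) - (2:ℤ) • (m u (m v (m a w))) + (2:ℤ) • (m u (m (m a v) w)) + (2:ℤ) • (m v (m u (m a w))) + (2:ℤ) • (m v (m (m a u) w)) - (2:ℤ) • (m (m a u) (m v w)) - (2:ℤ) • (m (m a v) (m u w)) - (2:ℤ) • (m (m u v) (m a w)) + (2:ℤ) • (m (m u (m a v)) w) - (2:ℤ) • (m (m (m a u) v) w) = 0 := by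
    intro a u v w
    have cf0 : (m a (m (m v w) u)) = (m a (m u (m v w))) := by rw [hcomm (m v w) u]
    have cf1 : (m a (m (m u w) v)) = (m a (m v (m u w))) := by rw [hcomm (m u w) v]
    have cf2 : (m w (m (m a u) v)) = (m (m (m a u) v) w) := by rw [hcomm w (m (m a u) v)]
    have cf3 : (m w (m (m a v) u)) = (m (m u (m a v)) w) := by rw [hcomm w (m (m a v) u), hcomm (m a v) u]
    have cf4 : (m u (m (m v a) w)) = (m u (m (m a v) w)) := by rw [hcomm v a]
    have cf5 : (m (m v a) (m u w)) = (m (m a v) (m u w)) := by rw [hcomm v a]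
    have cf6 : (m (m u w) (m a v)) = (m (m a v) (m u w)) := by rw [hcomm (m u w) (m a v)]
    have cf7 : (m (m a v) (m w u)) = (m (m a v) (m u w)) := by rw [hcomm w u]
    have cf8 : (m u (m (m w a) v)) = (m u (m v (m a w))) := by rw [hcomm (m w a) v, hcomm w a]
    have cf9 : (m v (m (m w a) u)) = (m v (m u (m a w))) := by rw [hcomm (m w a) u, hcomm w a]
    have cf10 : (m (m w a) (m v u)) = (m (m w a) (m u v)) := by rw [hcomm v u]
    have cf11 : (m (m v w) (m a u)) = (m (m a u) (m w v)) := by rw [hcomm (m v w) (m a u), hcomm v w]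
    linear_combination (norm := module) -(2:ℤ) • cf0 + (2:ℤ) • cf1 + (2:ℤ) • cf2 - (2:ℤ) • cf3 - (2:ℤ) • cf4 + (2:ℤ) • cf5 - (2:ℤ) • cf6 + (2:ℤ) • cf7 + (2:ℤ) • cf8 - (2:ℤ) • cf9 + (2:ℤ) • cf10 + (2:ℤ) • cf11 + (2:ℤ) • hJ a u v w - (2:ℤ) • hJ a u w v + (2:ℤ) • hJ a v w u
  have hB : ∀ x y u v : V, -(m u (m x (m y v))) + (m u (m y (m x v))) + (m x (m y (m u v))) - (m y (m x (m u v))) - (m (m x (m y u)) v) + (m (m y (m x u)) v) = 0 := by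
    intro x y u v
    have cf0 : (m x (m (m u v) y)) = (m x (m y (m u v))) := by rw [hcomm (m u v) y]
    have cf1 : (m y (m (m u v) x)) = (m y (m x (m u v))) := by rw [hcomm (m u v) x]
    have cf2 : (m v (m (m y u) x)) = (m (m x (m y u)) v) := by rw [hcomm v (m (m y u) x), hcomm (m y u) x]
    have cf3 : (m v (m (m x u) y)) = (m (m y (m x u)) v) := by rw [hcomm v (m (m x u) y), hcomm (m x u) y]
    have cf4 : (m u (m (m v y) x)) = (m u (m x (m y v))) := by rw [hcomm (m v y) x, hcomm v y]
    have cf5 : (m u (m (m v x) y)) = (m u (m y (m x v))) := by rw [hcomm (m v x) y, hcomm v x]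
    have cf6 : (m (m u v) (m y x)) = (m (m u v) (m x y)) := by rw [hcomm y x]
    have cf7 : (m (m y u) (m v x)) = (m (m v x) (m u y)) := by rw [hcomm (m y u) (m v x), hcomm y u]
    have cf8 : (m (m v y) (m u x)) = (m (m x u) (m v y)) := by rw [hcomm (m v y) (m u x), hcomm u x]
    linear_combination (norm := module) -cf0 + cf1 + cf2 - cf3 + cf4 - cf5 - cf6 - cf7 - cf8 + hJ x u v y - hJ y u v x
  have hA : ∀ a u v w : V, (2:ℤ) • (m a (m u (m v w))) - (2:ℤ) • (m a (m v (m u w))) + (2:ℤ) • (m a (m (m u v) w)) - (2:ℤ) • (m u (m v (m a w))) + (2:ℤ) • (m u (m (m a v) w)) + (2:ℤ) • (m v (m u (m a w))) + (2:ℤ) • (m v (m (m a u) w)) - (2:ℤ) • (m (m a u) (m v w)) - (2:ℤ) • (m (m a v) (m u w)) - (2:ℤ) • (m (m u v) (m a w)) + (2:ℤ) • (m (m u (m a v)) w) - (2:ℤ) • (m (m (m a u) v) w) = 0 := by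
    intro a u v w
    have cf0 : (m a (m (m v w) u)) = (m a (m u (m v w))) := by rw [hcomm (m v w) u]
    have cf1 : (m a (m (m u w) v)) = (m a (m v (m u w))) := by rw [hcomm (m u w) v]
    have cf2 : (m w (m (m a u) v)) = (m (m (m a u) v) w) := by rw [hcomm w (m (m a u) v)]
    have cf3 : (m w (m (m a v) u)) = (m (m u (m a v)) w) := by rw [hcomm w (m (m a v) u), hcomm (m a v) u]
    have cf4 : (m u (m (m v a) w)) = (m u (m (m a v) w)) := by rw [hcomm v a]
    have cf5 : (m (m v a) (m u w)) = (m (m a v) (m u w)) := by rw [hcomm v a]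
    have cf6 : (m (m u w) (m a v)) = (m (m a v) (m u w)) := by rw [hcomm (m u w) (m a v)]
    have cf7 : (m (m a v) (m w u)) = (m (m a v) (m u w)) := by rw [hcomm w u]
    have cf8 : (m u (m (m w a) v)) = (m u (m v (m a w))) := by rw [hcomm (m w a) v, hcomm w a]
    have cf9 : (m v (m (m w a) u)) = (m v (m u (m a w))) := by rw [hcomm (m w a) u, hcomm w a]
    have cf10 : (m (m w a) (m v u)) = (m (m w a) (m u v)) := by rw [hcomm v u]
    have cf11 : (m (m v w) (m a u)) = (m (m a u) (m w v)) := by rw [hcomm (m v w) (m a u), hcomm v w]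
    linear_combination (norm := module) -(2:ℤ) • cf0 + (2:ℤ) • cf1 + (2:ℤ) • cf2 - (2:ℤ) • cf3 - (2:ℤ) • cf4 + (2:ℤ) • cf5 - (2:ℤ) • cf6 + (2:ℤ) • cf7 + (2:ℤ) • cf8 - (2:ℤ) • cf9 + (2:ℤ) • cf10 + (2:ℤ) • cf11 + (2:ℤ) • hJ a u v w - (2:ℤ) • hJ a u w v + (2:ℤ) • hJ a v w u
  have hB : ∀ x y u v : V, -(m u (m x (m y v))) + (m u (m y (m x v))) + (m x (m y (m u v))) - (m y (m x (m u v))) - (m (m x (m y u)) v) + (m (m y (m x u)) v) = 0 := by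
    intro x y u v
    have cf0 : (m x (m (m u v) y)) = (m x (m y (m u v))) := by rw [hcomm (m u v) y]
    have cf1 : (m y (m (m u v) x)) = (m y (m x (m u v))) := by rw [hcomm (m u v) x]
    have cf2 : (m v (m (m y u) x)) = (m (m x (m y u)) v) := by rw [hcomm v (m (m y u) x), hcomm (m y u) x]
    have cf3 : (m v (m (m x u) y)) = (m (m y (m x u)) v) := by rw [hcomm v (m (m x u) y), hcomm (m x u) y]
    have cf4 : (m u (m (m v y) x)) = (m u (m x (m y v))) := by rw [hcomm (m v y) x, hcomm v y]
    have cf5 : (m u (m (m v x) y)) = (m u (m y (m x v))) := by rw [hcomm (m v x) y, hcomm v x]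
    have cf6 : (m (m u v) (m y x)) = (m (m u v) (m x y)) := by rw [hcomm y x]
    have cf7 : (m (m y u) (m v x)) = (m (m v x) (m u y)) := by rw [hcomm (m y u) (m v x), hcomm y u]
    have cf8 : (m (m v y) (m u x)) = (m (m x u) (m v y)) := by rw [hcomm (m v y) (m u x), hcomm u x]
    linear_combination (norm := module) -cf0 + cf1 + cf2 - cf3 + cf4 - cf5 - cf6 - cf7 - cf8 + hJ x u v y - hJ y u v x
  have hEt : ∀ x y u v w : V, -(2:ℤ) • (m u (m v (m x (m y w)))) + (2:ℤ) • (m u (m v (m y (m x w)))) - (2:ℤ) • (m u (m (m x (m y v)) w)) + (2:ℤ) • (m u (m (m y (m x v)) w)) + (2:ℤ) • (m v (m u (m x (m y w)))) - (2:ℤ) • (m v (m u (m y (m x w)))) + (2:ℤ) • (m v (m (m x (m y u)) w)) - (2:ℤ) • (m v (m (m y (m x u)) w)) + (2:ℤ) • (m x (m y (m u (m v w)))) - (2:ℤ) • (m x (m y (m v (m u w)))) + (2:ℤ) • (m x (m y (m (m u v) w))) - (2:ℤ) • (m y (m x (m u (m v w)))) + (2:ℤ) • (m y (m x (m v (m u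 w)))) - (2:ℤ) • (m y (m x (m (m u v) w))) - (2:ℤ) • (m (m u v) (m x (m y w))) + (2:ℤ) • (m (m u v) (m y (m x w))) - (2:ℤ) • (m (m u (m x (m y v))) w) + (2:ℤ) • (m (m u (m y (m x v))) w) - (2:ℤ) • (m (m x (m y u)) (m v w)) + (2:ℤ) • (m (m x (m y v)) (m u w)) + (2:ℤ) • (m (m y (m x u)) (m v w)) - (2:ℤ) • (m (m y (m x v)) (m u w)) - (2:ℤ) • (m (m (m x (m y u)) v) w) + (2:ℤ) • (m (m (m y (m x u)) v) w) = 0 := by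
    intro x y u v w
    have e1 := congrArg (m u) (hB x y v w)
    simp only [map_add, map_sub, map_neg, map_zero] at e1
    have e5 := congrArg (m v) (hB x y u w)
    simp only [map_add, map_sub, map_neg, map_zero] at e5
    have e6 := congrArg (m w) (hB x y u v)
    simp only [map_add, map_sub, map_neg, map_zero] at e6
    have cf0 : (m w (m (m x (m y u)) v)) = (m (m (m x (m y u)) v) w) := by rw [hcomm w (m (m x (m y u)) v)]
    have cf1 : (m w (m (m y (m x u)) v)) = (m (m (m y (m x u)) v) w) := by rw [hcomm w (m (m y (m x u)) v)]
    have cf2 : (m w (m u (m x (m y v)))) = (m (m u (m x (m y v))) w) := by rw [hcomm w (m u (m x (m y v)))]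
    have cf3 : (m w (m u (m y (m x v)))) = (m (m u (m y (m x v))) w) := by rw [hcomm w (m u (m y (m x v)))]
    have cf4 : (m w (m x (m y (m u v)))) = (m (m x (m y (m u v))) w) := by rw [hcomm w (m x (m y (m u v)))]
    have cf5 : (m w (m y (m x (m u v)))) = (m (m y (m x (m u v))) w) := by rw [hcomm w (m y (m x (m u v)))]
    linear_combination (norm := module) (2:ℤ) • cf0 - (2:ℤ) • cf1 + (2:ℤ) • cf2 - (2:ℤ) • cf3 - (2:ℤ) • cf4 + (2:ℤ) • cf5 + (2:ℤ) • hB x y (m u v) w + (2:ℤ) • hB x y u (m v w) - (2:ℤ) • hB x y v (m u w) + (2:ℤ) • e1 - (2:ℤ) • e5 + (2:ℤ) • e6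
  have hC : ∀ x y u v w : V, -(4:ℤ) • (m u (m v (m x (m y w)))) + (4:ℤ) • (m u (m v (m y (m x w)))) - (4:ℤ) • (m u (m v (m (m x y) w))) + (4:ℤ) • (m u (m (m v (m x y)) w)) - (4:ℤ) • (m u (m (m x (m v y)) w)) + (4:ℤ) • (m u (m (m (m v x) y) w)) + (4:ℤ) • (m v (m u (m x (m y w)))) - (4:ℤ) • (m v (m u (m y (m x w)))) + (4:ℤ) • (m v (m u (m (m x y) w))) + (4:ℤ) • (m v (m (m x (m y u)) w)) - (4:ℤ) • (m v (m (m y (m x u)) w)) + (4:ℤ) • (m v (m (m (m x y) u) w)) + (4:ℤ) • (m x (m y (m u (m v w)))) - (4:ℤ) • (m x (m y (m v (m u w)))) + (4:ℤ) • (m x (m y (m (m u v) w))) - (4:ℤ) • (m y (m x (m u (m v w)))) + (4:ℤ) • (m y (m x (m v (m u w)))) - (4:ℤ) • (m y (m x (m (m u v) w))) - (4:ℤ) • (m (m u v) (m x (m y w))) + (4:ℤ) • (m (m u v) (m y (m x w))) - (4:ℤ) • (m (m u v) (m (m x y) w)) + (4:ℤ) • (m (m u (m v (m x y))) w) - (4:ℤ)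 • (m (m u (m x (m v y))) w) + (4:ℤ) • (m (m u (m (m v x) y)) w) - (4:ℤ) • (m (m v (m x y)) (m u w)) + (4:ℤ) • (m (m x y) (m u (m v w))) - (4:ℤ) • (m (m x y) (m v (m u w))) + (4:ℤ) • (m (m x y) (m (m u v) w)) + (4:ℤ) • (m (m x (m v y)) (m u w)) - (4:ℤ) • (m (m x (m y u)) (m v w)) + (4:ℤ) • (m (m y (m x u)) (m v w)) - (4:ℤ) • (m (m (m v x) y) (m u w)) - (4:ℤ) • (m (m (m x y) u) (m v w)) - (4:ℤ) • (m (m (m x (m y u)) v) w) + (4:ℤ) • (m (m (m y (m x u)) v) w) - (4:ℤ) • (m (m (m (m x y) u) v) w) = 0 := by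
    intro x y u v w
    have cf0 : (m (m u (m y (m x v))) w) = (m (m u (m (m v x) y)) w) := by rw [hcomm y (m x v), hcomm x v]
    have cf1 : (m (m u (m (m x y) v)) w) = (m (m u (m v (m x y))) w) := by rw [hcomm (m x y) v]
    have cf2 : (m (m u (m x (m y v))) w) = (m (m u (m x (m v y))) w) := by rw [hcomm y v]
    have cf3 : (m u (m (m y (m x v)) w)) = (m u (m (m (m v x) y) w)) := by rw [hcomm y (m x v), hcomm x v]
    have cf4 : (m u (m (m (m x y) v) w)) = (m u (m (m v (m x y)) w)) := by rw [hcomm (m x y) v]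
    have cf5 : (m u (m (m x (m y v)) w)) = (m u (m (m x (m v y)) w)) := by rw [hcomm y v]
    have cf6 : (m (m y (m x v)) (m u w)) = (m (m (m v x) y) (m u w)) := by rw [hcomm y (m x v), hcomm x v]
    have cf7 : (m (m (m x y) v) (m u w)) = (m (m v (m x y)) (m u w)) := by rw [hcomm (m x y) v]
    have cf8 : (m (m x (m y v)) (m u w)) = (m (m x (m v y)) (m u w)) := by rw [hcomm y v]
    linear_combination (norm := module) -(4:ℤ) • cf0 - (4:ℤ) • cf1 + (4:ℤ) • cf2 - (4:ℤ) • cf3 - (4:ℤ) • cf4 + (4:ℤ) • cf5 + (4:ℤ) • cf6 + (4:ℤ) • cf7 - (4:ℤ) • cf8 + (2:ℤ) • hA (m x y) u v w + (2:ℤ) • hEt x y u v w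
  have hDapp : ∀ a b c : V, Dop m a b c = triple m a b c := by
    intro a b c
    simp [Dop, triple, Ring.lie_def, LinearMap.add_apply, LinearMap.smul_apply,
      LinearMap.sub_apply, Module.End.mul_apply, two_smul]
    abel
  have hCt : ∀ x y u v w : V,
      triple m x y (triple m u v w) - triple m u v (triple m x y w)
        = triple m (triple m x y u) v w - triple m u (triple m v x y) w := by
    intro x y u v w
    simp only [triple, two_smul, map_add, map_sub, LinearMap.add_apply, LinearMap.sub_apply]
    linear_combination (norm := module) hC x y u v w
  have main : ∀ x y u v : V,
      ⁅Dop m x y, Dop m u v⁆ = Dop m (triple m x y u) v - Dop m u (triple m v x y) := by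
    intro x y u v
    ext w
    simp only [Ring.lie_def, LinearMap.sub_apply, Module.End.mul_apply, hDapp]
    exact hCt x y u v w
  intro x y u v
  refine ⟨main x y u v, ?_⟩
  rw [show ⁅Dop m x y, Dop m u v⁆ = -⁅Dop m u v, Dop m x y⁆ by rw [Ring.lie_def, Ring.lie_def]; abel, main u v x y]
  abel
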